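/- Let π be a permutation of {0, 1, …, n−1} such that |π(i) − i| ≤ k for every i. Then the number of inversions of π, i.e. the number of pairs (i, j) with i < j and π(i) > π(j), is at most n·k. -/

import Mathlib

/-- A permutation of `{0, …, n-1}` in which every element is within distance
`k` of its final sorted position has at most `n * k` inversions. -/
theorem inversions_le_of_dist_le {n k : ℕ} (π : Equiv.Perm (Fin n))
    (hdist : ∀ i : Fin n, |((π i : ℕ) : ℤ) - ((i : ℕ) : ℤ)| ≤ (k : ℤ)) :
    (Finset.univ.filter
        (fun p : Fin n × Fin n => p.1 < p.2 ∧ π p.2 < π p.1)).card ≤ n * k := by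
  classical
  set S := Finset.univ.filter
      (fun p : Fin n × Fin n => p.1 < p.2 ∧ π p.2 < π p.1) with hS
  have h1 : ∀ i : Fin n, (π i : ℕ) ≤ (i : ℕ) + k := by
    intro i; have := abs_le.mp (hdist i); omega
  have h2 : ∀ i : Fin n, (i : ℕ) ≤ (π i : ℕ) + k := by
    intro i; have := abs_le.mp (hdist i); omega
  have hmem : ∀ p : Fin n × Fin n, p ∈ S ↔ p.1 < p.2 ∧ π p.2 < π p.1 := by
    intro p; simp [hS]
  -- Bound via fibers over the first coordinate.
  have hA : S.card ≤ ∑ i : Fin n, ((π i : ℕ) + k - (i : ℕ) - 1) := by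
    rw [Finset.card_eq_sum_card_fiberwise
        (f := fun p : Fin n × Fin n => p.1) (t := Finset.univ)
        (fun x _ => Finset.mem_univ _)]
    apply Finset.sum_le_sum
    intro i _
    have hle : (S.filter (fun p => p.1 = i)).card ≤
        (Finset.Ioo ((i : ℕ)) ((π i : ℕ) + k)).card := by
      apply Finset.card_le_card_of_injOn (fun p => (p.2 : ℕ))
      · intro p hp
        simp only [Finset.mem_coe, Finset.mem_filter] at hp
        obtain ⟨hpS, hp1⟩ := hp
        obtain ⟨hlt, hinv⟩ := (hmem p).mp hpS
        have hv : (π p.2 : ℕ) < (π i : ℕ) := by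
          rw [← hp1]; exact_mod_cast hinv
        have := h2 p.2
        have h1' : (i : ℕ) < (p.2 : ℕ) := by rw [← hp1]; exact_mod_cast hlt
        simp only [Finset.mem_coe, Finset.mem_Ioo]
        omega
      · intro p hp q hq hpq
        simp only [Finset.mem_coe, Finset.mem_filter] at hp hq
        have : p.2 = q.2 := Fin.ext hpq
        exact Prod.ext (hp.2.trans hq.2.symm) this
    calc (S.filter (fun p => p.1 = i)).card
        ≤ (Finset.Ioo ((i : ℕ)) ((π i : ℕ) + k)).card := hle
      _ = (π i : ℕ) + k - (i : ℕ) - 1 := by rw [Nat.card_Ioo]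
  -- Bound via fibers over the second coordinate.
  have hB : S.card ≤ ∑ j : Fin n, ((j : ℕ) + k - (π j : ℕ) - 1) := by
    rw [Finset.card_eq_sum_card_fiberwise
        (f := fun p : Fin n × Fin n => p.2) (t := Finset.univ)
        (fun x _ => Finset.mem_univ _)]
    apply Finset.sum_le_sum
    intro j _
    have hle : (S.filter (fun p => p.2 = j)).card ≤
        (Finset.Ioo ((π j : ℕ)) ((j : ℕ) + k)).card := by
      apply Finset.card_le_card_of_injOn (fun p => (p.1 : ℕ) + k)
      · intro p hp
        simp only [Finset.mem_coe, Finset.mem_filter] at hp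
        obtain ⟨hpS, hp2⟩ := hp
        obtain ⟨hlt, hinv⟩ := (hmem p).mp hpS
        have hv : (π j : ℕ) < (π p.1 : ℕ) := by
          rw [← hp2]; exact_mod_cast hinv
        have := h1 p.1
        have h1' : (p.1 : ℕ) < (j : ℕ) := by rw [← hp2]; exact_mod_cast hlt
        simp only [Finset.mem_coe, Finset.mem_Ioo]
        omega
      · intro p hp q hq hpq
        simp only [Finset.mem_coe, Finset.mem_filter] at hp hq
        have hpq' : (p.1 : ℕ) + k = (q.1 : ℕ) + k := hpq
        have : p.1 = q.1 := Fin.ext (by omega)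
        exact Prod.ext this (hp.2.trans hq.2.symm)
    calc (S.filter (fun p => p.2 = j)).card
        ≤ (Finset.Ioo ((π j : ℕ)) ((j : ℕ) + k)).card := hle
      _ = (j : ℕ) + k - (π j : ℕ) - 1 := by rw [Nat.card_Ioo]
  -- Combine the two bounds.
  have hsum : (∑ i : Fin n, ((π i : ℕ) + k - (i : ℕ) - 1)) +
      (∑ j : Fin n, ((j : ℕ) + k - (π j : ℕ) - 1)) ≤ n * (2 * k) := by
    rw [← Finset.sum_add_distrib]
    calc ∑ i : Fin n, (((π i : ℕ) + k - (i : ℕ) - 1) +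
            ((i : ℕ) + k - (π i : ℕ) - 1))
        ≤ ∑ _i : Fin n, 2 * k := by
          apply Finset.sum_le_sum
          intro i _
          have := h1 i
          have := h2 i
          omega
      _ = n * (2 * k) := by simp [Finset.sum_const, Finset.card_univ, mul_comm]
  have hnk : n * (2 * k) = 2 * (n * k) := by ring
  omega
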